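/- Let M be a Riemann-Roch monomial ideal (artinian, level of genus g, reflection-invariant with canonical monomial x^K). If the monomial x^K divides x^b (with b ∈ N^m), then rank(x^b) = degree(x^b) − g. -/

import Mathlib

open Finset

/-- A set of exponent vectors is a monomial ideal iff it is upward closed. -/
def UpClosed {m : ℕ} (M : Set (Fin m → ℕ)) : Prop :=
  ∀ u ∈ M, ∀ v : Fin m → ℕ, (∀ i, u i ≤ v i) → v ∈ M

/-- Artinian: a power of each variable lies in `M`. -/
def ArtinianMono {m : ℕ} (M : Set (Fin m → ℕ)) : Prop :=
  ∀ i : Fin m, ∃ k : ℕ, (fun j => if j = i then k else 0) ∈ M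

/-- Socle monomials: `x^c ∉ M` with `x_i·x^c ∈ M` for all `i`. -/
def MonSoc {m : ℕ} (M : Set (Fin m → ℕ)) : Set (Fin m → ℕ) :=
  {c | c ∉ M ∧ ∀ i : Fin m, (fun j => c j + if j = i then 1 else 0) ∈ M}

/-- `degree⁺(u)`: the sum of the positive coordinates of `u`. -/
def degP {m : ℕ} (w : Fin m → ℤ) : ℤ := ∑ i, max (w i) 0

/-- total degree -/
def degZ {m : ℕ} (w : Fin m → ℤ) : ℤ := ∑ i, w i

def zvec {m : ℕ} (b : Fin m → ℕ) : Fin m → ℤ := fun i => (b i : ℤ)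

/-- rank of a Laurent monomial `x^b` with respect to `M`. -/
noncomputable def rnk {m : ℕ} (M : Set (Fin m → ℕ)) (b : Fin m → ℤ) : ℤ :=
  sInf ((fun c => degP (b - zvec c)) '' MonSoc M) - 1

/-- `M` is level of genus `g`: all socle monomials have degree `g - 1`. -/
def LevelOf {m : ℕ} (M : Set (Fin m → ℕ)) (g : ℤ) : Prop :=
  ∀ c ∈ MonSoc M, degZ (zvec c) = g - 1

/-- Reflection invariance with canonical monomial `x^K`. -/
def ReflInv {m : ℕ} (M : Set (Fin m → ℕ)) (K : Fin m → ℕ) : Prop :=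
  ∀ c ∈ MonSoc M, (∀ i, c i ≤ K i) ∧ (fun i => K i - c i) ∈ MonSoc M

lemma soc_nonempty {m : ℕ} (M : Set (Fin m → ℕ)) (hup : UpClosed M)
    (hart : ArtinianMono M) (hproper : (0 : Fin m → ℕ) ∉ M) :
    (MonSoc M).Nonempty := by
  classical
  choose k hk using hart
  set B : Finset (Fin m → ℕ) := Fintype.piFinset (fun i => Finset.range (k i + 1)) with hB
  set S : Finset (Fin m → ℕ) := B.filter (fun u => u ∉ M) with hS
  have h0 : (0 : Fin m → ℕ) ∈ S := by
    simp only [hS, hB, Finset.mem_filter, Fintype.mem_piFinset, Finset.mem_range]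
    refine ⟨fun i => Nat.succ_pos _, hproper⟩
  obtain ⟨c, hcS, hmax⟩ := S.exists_max_image (fun u => ∑ i, u i) ⟨0, h0⟩
  have hcM : c ∉ M := (Finset.mem_filter.mp hcS).2
  have hbound : ∀ i, c i ≤ k i := by
    intro i
    have := (Fintype.mem_piFinset.mp (Finset.mem_filter.mp hcS).1) i
    simpa [Nat.lt_succ_iff] using this
  have hstrict : ∀ i, c i < k i := by
    intro i
    rcases lt_or_eq_of_le (hbound i) with h | h
    · exact h
    · exfalso
      apply hcM
      apply hup _ (hk i) c
      intro j
      by_cases hji : j = i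
      · subst hji; simpa using h.ge
      · simp [hji]
  refine ⟨c, hcM, ?_⟩
  intro i
  by_contra hmem
  have hinS : (fun j => c j + if j = i then 1 else 0) ∈ S := by
    simp only [hS, hB, Finset.mem_filter, Fintype.mem_piFinset, Finset.mem_range]
    refine ⟨fun j => ?_, hmem⟩
    by_cases hji : j = i
    · subst hji; simp; exact hstrict j
    · simp [hji]; exact hbound j
  have := hmax _ hinS
  have hsum : ∑ j, (c j + if j = i then 1 else 0) = (∑ j, c j) + 1 := by
    rw [Finset.sum_add_distrib]
    simp
  omega

/-- if `x^K` divides `x^b` then `rank(x^b) = deg(x^b) - g`. -/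
theorem stmt3 {m : ℕ} (M : Set (Fin m → ℕ)) (g : ℤ) (K : Fin m → ℕ)
    (hup : UpClosed M) (hart : ArtinianMono M) (hproper : (0 : Fin m → ℕ) ∉ M)
    (hlev : LevelOf M g) (hrefl : ReflInv M K)
    (b : Fin m → ℕ) (hdvd : ∀ i, K i ≤ b i) :
    rnk M (zvec b) = degZ (zvec b) - g := by
  have hval : ∀ c ∈ MonSoc M, degP (zvec b - zvec c) = degZ (zvec b) - g + 1 := by
    intro c hc
    have hle : ∀ i, c i ≤ b i := fun i => le_trans ((hrefl c hc).1 i) (hdvd i)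
    have : degP (zvec b - zvec c) = degZ (zvec b) - degZ (zvec c) := by
      unfold degP degZ
      rw [← Finset.sum_sub_distrib]
      apply Finset.sum_congr rfl
      intro i _
      have : (0 : ℤ) ≤ zvec b i - zvec c i := by
        simp [zvec]; exact_mod_cast hle i
      simp [Pi.sub_apply, max_eq_left this]
    rw [this, hlev c hc]; ring
  have himg : ((fun c => degP (zvec b - zvec c)) '' MonSoc M) = {degZ (zvec b) - g + 1} := by
    obtain ⟨c0, hc0⟩ := soc_nonempty M hup hart hproper
    apply Set.eq_singleton_iff_nonempty_unique_mem.mpr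
    constructor
    · exact ⟨_, ⟨c0, hc0, hval c0 hc0⟩⟩
    · rintro x ⟨c, hc, rfl⟩; exact hval c hc
  unfold rnk
  rw [himg, csInf_singleton]
  ring
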